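/- Let $(\Omega, \mu)$ be a probability space, $V$ an $N$-dimensional subspace of $L^2(\mu, \mathbb{C})$, and $s_1, \dots, s_N \in V$. Then $\int_{\Omega^N} |\det(s_i(x_j))_{i,j}|^2 \, d\mu(x_1) \cdots d\mu(x_N) = N! \, \det\big( \langle s_i, s_j \rangle_{L^2(\mu)} \big)_{i,j}$. -/

import Mathlib

open MeasureTheory Equiv
open scoped ENNReal

/-- For square-integrable functions `s₁, …, s_N ∈ L²(μ)` on a probability space,
`∫_{Ω^N} |det(sᵢ(xⱼ))|² dμ(x₁)⋯dμ(x_N) = N! · det(⟨sᵢ, sⱼ⟩_{L²(μ)})`. -/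
theorem stmt_2 {Ω : Type*} [MeasurableSpace Ω] (μ : Measure Ω) [IsProbabilityMeasure μ]
    (N : ℕ) (s : Fin N → Ω → ℂ)
    (hmeas : ∀ i, Measurable (s i))
    (hL2 : ∀ i, MemLp (s i) 2 μ) :
    ((∫ x : Fin N → Ω, ‖Matrix.det (Matrix.of fun i j => s i (x j))‖ ^ 2
        ∂(Measure.pi fun _ => μ) : ℝ) : ℂ) =
      (Nat.factorial N : ℂ) *
        Matrix.det (Matrix.of fun i j => ∫ a, s i a * (starRingEnd ℂ) (s j a) ∂μ) := by
  classical
  letI : MeasureSpace Ω := ⟨μ⟩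
  haveI : IsProbabilityMeasure (volume : Measure Ω) := inferInstanceAs (IsProbabilityMeasure μ)
  set A : Matrix (Fin N) (Fin N) ℂ :=
    Matrix.of fun i j => ∫ a, s i a * (starRingEnd ℂ) (s j a) ∂μ with hA
  -- conjugates are in L²
  have hL2c : ∀ i, MemLp (fun y => (starRingEnd ℂ) (s i y)) 2 μ := by
    intro i
    refine ⟨RCLike.continuous_conj.comp_aestronglyMeasurable (hL2 i).1, ?_⟩
    have h : eLpNorm (fun y => (starRingEnd ℂ) (s i y)) 2 μ = eLpNorm (s i) 2 μ :=
      eLpNorm_congr_norm_ae (Filter.Eventually.of_forall fun x => by simp)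
    rw [h]; exact (hL2 i).2
  -- pairwise products are integrable
  have hg : ∀ i j : Fin N, Integrable (fun y => s i y * (starRingEnd ℂ) (s j y)) μ := by
    intro i j
    have h1 : (1 : ℝ≥0∞) / 1 = 1 / 2 + 1 / 2 := by
      rw [ENNReal.div_add_div_same, one_div_one, show (1 + 1 : ℝ≥0∞) = 2 from by norm_num,
        ENNReal.div_self (by norm_num) (by norm_num)]
    have h2 := (hL2c j).smul (hL2 i) (r := 1)
    rw [memLp_one_iff_integrable] at h2
    exact h2.congr (Filter.Eventually.of_forall fun y => by simp [smul_eq_mul])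
  -- products over coordinates are integrable on the product space
  have hFint : ∀ σ τ : Equiv.Perm (Fin N),
      Integrable (fun x : Fin N → Ω =>
          ∏ j, (s (σ j) (x j) * (starRingEnd ℂ) (s (τ j) (x j))))
        (Measure.pi fun _ => μ) := by
    intro σ τ
    exact Integrable.fintype_prod (𝕜 := ℂ)
      (f := fun j y => s (σ j) y * (starRingEnd ℂ) (s (τ j) y))
      (fun j => hg (σ j) (τ j))
  -- Fubini for the products
  have hFeq : ∀ σ τ : Equiv.Perm (Fin N),
      ∫ x : Fin N → Ω, ∏ j, (s (σ j) (x j) * (starRingEnd ℂ) (s (τ j) (x j)))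
          ∂(Measure.pi fun _ => μ)
        = ∏ j, A (σ j) (τ j) := by
    intro σ τ
    exact integral_fintype_prod_eq_prod (𝕜 := ℂ) (ι := Fin N)
      (f := fun j y => s (σ j) y * (starRingEnd ℂ) (s (τ j) y))
  -- pointwise expansion of the squared determinant
  have hdet : ∀ x : Fin N → Ω,
      ((‖Matrix.det (Matrix.of fun i j => s i (x j))‖ ^ 2 : ℝ) : ℂ)
        = ∑ σ : Equiv.Perm (Fin N), ∑ τ : Equiv.Perm (Fin N),
            ((Equiv.Perm.sign σ : ℤ) : ℂ) * ((Equiv.Perm.sign τ : ℤ) : ℂ) *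
              ∏ j, (s (σ j) (x j) * (starRingEnd ℂ) (s (τ j) (x j))) := by
    intro x
    have h1 : ((‖Matrix.det (Matrix.of fun i j => s i (x j))‖ ^ 2 : ℝ) : ℂ)
        = (Matrix.det (Matrix.of fun i j => s i (x j))) *
          (starRingEnd ℂ) (Matrix.det (Matrix.of fun i j => s i (x j))) := by
      rw [Complex.mul_conj]
      norm_cast
      rw [Complex.sq_norm]
    rw [h1, RingHom.map_det, Matrix.det_apply', Matrix.det_apply', Finset.sum_mul_sum]
    refine Finset.sum_congr rfl fun σ _ => Finset.sum_congr rfl fun τ _ => ?_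
    simp only [RingHom.mapMatrix_apply, Matrix.map_apply, Matrix.of_apply,
      Finset.prod_mul_distrib]
    ring
  -- sign squares to one
  have hsign : ∀ σ : Equiv.Perm (Fin N),
      ((Equiv.Perm.sign σ : ℤ) : ℂ) * ((Equiv.Perm.sign σ : ℤ) : ℂ) = 1 := by
    intro σ
    rw [← Int.cast_mul, ← Units.val_mul, Int.units_mul_self]
    simp
  -- main computation
  have hio : (∫ x : Fin N → Ω, ((‖(Matrix.of fun i j => s i (x j)).det‖ ^ 2 : ℝ) : ℂ)
      ∂(Measure.pi fun _ => μ))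
      = ((∫ x : Fin N → Ω, ‖(Matrix.of fun i j => s i (x j)).det‖ ^ 2
        ∂(Measure.pi fun _ => μ) : ℝ) : ℂ) := integral_ofReal
  rw [← hio]
  have step1 : ∫ x : Fin N → Ω,
      ((‖Matrix.det (Matrix.of fun i j => s i (x j))‖ ^ 2 : ℝ) : ℂ)
        ∂(Measure.pi fun _ => μ)
      = ∑ σ : Equiv.Perm (Fin N), ∑ τ : Equiv.Perm (Fin N),
          ((Equiv.Perm.sign σ : ℤ) : ℂ) * ((Equiv.Perm.sign τ : ℤ) : ℂ) *
            ∏ j, A (σ j) (τ j) := by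
    simp only [hdet]
    rw [integral_finset_sum _ (fun σ _ =>
      integrable_finset_sum _ (fun τ _ => (hFint σ τ).const_mul _))]
    refine Finset.sum_congr rfl fun σ _ => ?_
    rw [integral_finset_sum _ (fun τ _ => (hFint σ τ).const_mul _)]
    refine Finset.sum_congr rfl fun τ _ => ?_
    rw [integral_const_mul, hFeq]
  rw [step1]
  -- the inner sum reindexed: for each σ it equals det A
  have hdetA : ∑ ρ : Equiv.Perm (Fin N),
      ((Equiv.Perm.sign ρ : ℤ) : ℂ) * ∏ k, A k (ρ k) = A.det := by
    rw [← Matrix.det_transpose, Matrix.det_apply']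
    rfl
  have hinner : ∀ σ : Equiv.Perm (Fin N), ∑ τ : Equiv.Perm (Fin N),
      ((Equiv.Perm.sign σ : ℤ) : ℂ) * ((Equiv.Perm.sign τ : ℤ) : ℂ) *
        ∏ j, A (σ j) (τ j) = A.det := by
    intro σ
    rw [← Equiv.sum_comp (Equiv.mulRight σ)
      (fun τ => ((Equiv.Perm.sign σ : ℤ) : ℂ) * ((Equiv.Perm.sign τ : ℤ) : ℂ) *
        ∏ j, A (σ j) (τ j)), ← hdetA]
    refine Finset.sum_congr rfl fun ρ _ => ?_
    simp only [Equiv.coe_mulRight]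
    have hp : ∏ j, A (σ j) ((ρ * σ) j) = ∏ k, A k (ρ k) := by
      simp only [Equiv.Perm.mul_apply]
      exact Equiv.prod_comp σ (fun k => A k (ρ k))
    rw [hp, Equiv.Perm.sign_mul, Units.val_mul, Int.cast_mul]
    linear_combination ((Equiv.Perm.sign ρ : ℤ) : ℂ) * (∏ k, A k (ρ k)) * hsign σ
  rw [Finset.sum_congr rfl (fun σ _ => hinner σ), Finset.sum_const, Finset.card_univ,
    Fintype.card_perm, Fintype.card_fin, nsmul_eq_mul]
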